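/- Fix p with 1 < p ≤ 2. The function β(t, a) := (1/2) a^{p-2} t² is convex on the convex set {(t, a) ∈ ℝ² : t ≥ 0, a > 0}. -/

import Mathlib

/-- `β(t,a) = (1/2) a^(p-2) t²` is convex on `[0,∞) × (0,∞)`. -/
theorem stmt_6 (p : ℝ) (hp1 : 1 < p) (hp2 : p ≤ 2) :
    ConvexOn ℝ {x : ℝ × ℝ | 0 ≤ x.1 ∧ 0 < x.2}
      (fun x : ℝ × ℝ => (1 / 2) * x.2 ^ (p - 2) * x.1 ^ 2) := by
  set q : ℝ := 2 - p with hqdef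
  have hq0 : 0 ≤ q := by simp [hqdef]; linarith
  have hq1 : q ≤ 1 := by simp [hqdef]; linarith
  constructor
  · rintro ⟨t, a⟩ ⟨ht, ha⟩ ⟨s, b⟩ ⟨hs, hb⟩ l m hl hm hlm
    refine ⟨by simp [smul_eq_mul]; positivity, ?_⟩
    simp only [Prod.smul_mk, Prod.mk_add_mk, smul_eq_mul]
    rcases hl.lt_or_eq with h | h
    · have h1 : 0 < l * a := mul_pos h ha
      have h2 : 0 ≤ m * b := mul_nonneg hm hb.le
      simpa using add_pos_of_pos_of_nonneg h1 h2
    · have hm1 : m = 1 := by linarith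
      simpa [← h, hm1] using hb
  · rintro ⟨t, a⟩ ⟨ht, ha⟩ ⟨s, b⟩ ⟨hs, hb⟩ l m hl hm hlm
    simp only [Prod.smul_mk, Prod.mk_add_mk, smul_eq_mul]
    set A : ℝ := a ^ q with hA
    set B : ℝ := b ^ q with hB
    have hApos : 0 < A := Real.rpow_pos_of_pos ha _
    have hBpos : 0 < B := Real.rpow_pos_of_pos hb _
    have hc : 0 < l * a + m * b := by
      rcases hl.lt_or_eq with h | h
      · have h1 : 0 < l * a := mul_pos h ha
        have h2 : 0 ≤ m * b := mul_nonneg hm hb.le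
        linarith
      · have hm1 : m = 1 := by linarith
        simp [← h, hm1]; exact hb
    set C : ℝ := (l * a + m * b) ^ q with hC
    have hCpos : 0 < C := Real.rpow_pos_of_pos hc _
    -- exponent rewrites
    have hpq : p - 2 = -q := by ring
    have hAe : a ^ (p - 2) = A⁻¹ := by rw [hpq, Real.rpow_neg ha.le]
    have hBe : b ^ (p - 2) = B⁻¹ := by rw [hpq, Real.rpow_neg hb.le]
    have hCe : (l * a + m * b) ^ (p - 2) = C⁻¹ := by rw [hpq, Real.rpow_neg hc.le]
    -- concavity of rpow
    have hconc := (Real.concaveOn_rpow hq0 hq1).2 (Set.mem_Ici.2 ha.le)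
      (Set.mem_Ici.2 hb.le) hl hm hlm
    simp only [smul_eq_mul] at hconc
    have hconc' : l * A + m * B ≤ C := hconc
    -- main inequality
    have main : (l * t + m * s) ^ 2 / C ≤ (l * t ^ 2 * B + m * s ^ 2 * A) / (A * B) := by
      rw [div_le_div_iff₀ hCpos (by positivity)]
      calc (l * t + m * s) ^ 2 * (A * B)
          ≤ (l * A + m * B) * (l * t ^ 2 * B + m * s ^ 2 * A) := by
            nlinarith [mul_nonneg (mul_nonneg hl hm) (sq_nonneg (t * B - s * A)),
              sq_nonneg (l * t - m * s), mul_pos hApos hBpos]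
        _ ≤ C * (l * t ^ 2 * B + m * s ^ 2 * A) := by
            apply mul_le_mul_of_nonneg_right hconc'
            positivity
        _ = (l * t ^ 2 * B + m * s ^ 2 * A) * C := mul_comm _ _
    rw [hAe, hBe, hCe]
    have e1 : (1 / 2 : ℝ) * C⁻¹ * (l * t + m * s) ^ 2
        = (1 / 2) * ((l * t + m * s) ^ 2 / C) := by ring
    have e2 : l * (1 / 2 * A⁻¹ * t ^ 2) + m * (1 / 2 * B⁻¹ * s ^ 2)
        = (1 / 2) * ((l * t ^ 2 * B + m * s ^ 2 * A) / (A * B)) := by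
      field_simp
    rw [e1, e2]
    linarith [main]
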